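/- Let A be a C*-algebra with character χ, and let γ be a real bounded functional on A, extended to the unitization Ã with γ̃(1) = 0 and γ̃ positive on ker χ̃. Let q be the nonnegative sesquilinear form q(a,b) = γ(a*b) − conj(γ(a))χ(b) − conj(χ(a))γ(b), and define d : A → k as the canonical map into the Hilbert space completion of A/N_q (N_q the null space of q). Then for all a, b ∈ A: ‖d(ab) − χ(b)d(a)‖² ≤ ‖a‖² ‖d(b)‖². -/

import Mathlib

open scoped ComplexOrder

/-- The sesquilinear form `q(a,b) = γ(a*b) − conj(γ(a))·χ(b) − conj(χ(a))·γ(b)`. -/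
noncomputable def qform {A : Type*} [NonUnitalNormedRing A] [StarRing A]
    [NormedSpace ℂ A] (χ : A →⋆ₙₐ[ℂ] ℂ) (γ : A →L[ℂ] ℂ) (a b : A) : ℂ :=
  γ (star a * b) - starRingEnd ℂ (γ a) * χ b - starRingEnd ℂ (χ a) * γ b

/-- Let `A` be a C*-algebra with character `χ`, `γ` a real bounded
functional whose canonical extension `γ̃` to the unitization (with `γ̃(1) = 0`) is
positive on `ker χ̃`.  Let `k` be the GNS-type Hilbert space for the nonnegative
sesquilinear form `q` and `d : A → k` the canonical map, so `⟨d(a), d(b)⟩ = q(a,b)`.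
Then `‖d(ab) − χ(b)d(a)‖² ≤ ‖a‖² ‖d(b)‖²` for all `a, b ∈ A`. -/
theorem stmt5 {A k : Type*} [NonUnitalNormedRing A] [StarRing A] [CStarRing A]
    [NormedSpace ℂ A] [IsScalarTower ℂ A A] [SMulCommClass ℂ A A] [StarModule ℂ A]
    [NormedAddCommGroup k] [InnerProductSpace ℂ k] [CompleteSpace k]
    (χ : A →⋆ₙₐ[ℂ] ℂ) (hχ : χ ≠ 0)
    (γ : A →L[ℂ] ℂ)
    (hreal : ∀ a : A, γ (star a) = starRingEnd ℂ (γ a))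
    (hpos : ∀ x : Unitization ℂ A, x.fst + χ x.snd = 0 → 0 ≤ γ ((star x * x).snd))
    (d : A → k)
    (hd : ∀ a b : A, (inner ℂ (d a) (d b) : ℂ) = qform χ γ a b) :
    ∀ a b : A, ‖d (a * b) - χ b • d a‖ ^ 2 ≤ ‖a‖ ^ 2 * ‖d b‖ ^ 2 := by
  intro a b
  classical
  -- star lemmas specialized to the unitization (to fix instance paths)
  have hsm : ∀ x y : Unitization ℂ A, star (x * y) = star y * star x := fun x y => star_mul x y
  have hss : ∀ x : Unitization ℂ A, star (star x) = x := fun x => star_star x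
  have hsa : ∀ x y : Unitization ℂ A, star (x + y) = star x + star y := fun x y => star_add x y
  have hsmulm : ∀ (r : ℂ) (x y : Unitization ℂ A), (r • x) * y = r • (x * y) :=
    fun r x y => Algebra.smul_mul_assoc r x y
  have hstar_smul : ∀ (r : ℂ) (x : Unitization ℂ A),
      star (r • x) = (starRingEnd ℂ) r • star x := fun r x => star_smul r x
  set c : A := star a * a with hc
  set w : Unitization ℂ A := (b : Unitization ℂ A) - Unitization.inl (χ b) with hwdef
  have hwfst : w.fst = -χ b := by rw [hwdef]; show (0 : ℂ) - χ b = -χ b; ring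
  have hwsnd : w.snd = b := by rw [hwdef]; show b - 0 = b; simp
  set B : Unitization ℂ A → Unitization ℂ A → ℂ :=
    fun y₁ y₂ => γ ((star (y₁ * w) * (y₂ * w)).snd) with hBdef
  have hBapp : ∀ y₁ y₂, B y₁ y₂ = γ ((star (y₁ * w) * (y₂ * w)).snd) := fun _ _ => rfl
  -- the extended character vanishes on `y * w`
  have hker : ∀ y : Unitization ℂ A, (y * w).fst + χ ((y * w).snd) = 0 := by
    intro y
    simp only [Unitization.fst_mul, Unitization.snd_mul, hwfst, hwsnd, map_add, map_smul,
      map_mul, smul_eq_mul]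
    ring
  have hBpos : ∀ y, 0 ≤ B y y := fun y => hpos _ (hker y)
  have hBsymm : ∀ y₁ y₂, (starRingEnd ℂ) (B y₂ y₁) = B y₁ y₂ := by
    intro y₁ y₂
    have h1 : star (y₂ * w) * (y₁ * w) = star (star (y₁ * w) * (y₂ * w)) := by
      simp only [hsm, hss]
    have h2 : B y₂ y₁ = (starRingEnd ℂ) (B y₁ y₂) := by
      rw [hBapp, hBapp, h1, Unitization.snd_star, hreal]
    rw [h2]
    simp
  have hBaddl : ∀ x y z, B (x + y) z = B x z + B y z := by
    intro x y z
    simp only [hBapp, add_mul, hsa, Unitization.snd_add, map_add]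
  have hBsmull : ∀ (r : ℂ) x y, B (r • x) y = (starRingEnd ℂ) r * B x y := by
    intro r x y
    rw [hBapp, hBapp, hsmulm, hstar_smul, hsmulm, Unitization.snd_smul, map_smul,
      smul_eq_mul]
  -- Cauchy–Schwarz for B
  have CS : ∀ x y : Unitization ℂ A, ‖B x y‖ * ‖B y x‖ ≤ (B x x).re * (B y y).re := by
    letI core : PreInnerProductSpace.Core ℂ (Unitization ℂ A) :=
      { inner := B
        conj_inner_symm := hBsymm
        re_inner_nonneg := fun y => (Complex.nonneg_iff.mp (hBpos y)).1
        add_left := hBaddl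
        smul_left := fun x y r => hBsmull r x y }
    intro x y
    exact @InnerProductSpace.Core.inner_mul_inner_self_le ℂ (Unitization ℂ A) _ _ _ core x y
  set S : A → ℂ := fun z => B 1 ((z : Unitization ℂ A)) with hSdef
  have hSapp : ∀ z : A, S z = B 1 (z : Unitization ℂ A) := fun _ => rfl
  have hSB : ∀ m₁ m₂ : A,
      B (m₁ : Unitization ℂ A) (m₂ : Unitization ℂ A) = S (star m₁ * m₂) := by
    intro m₁ m₂
    rw [hSapp, hBapp, hBapp]
    congr 1
    have hin : ((star m₁ : A) : Unitization ℂ A) = star (m₁ : Unitization ℂ A) :=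
      Unitization.inr_star m₁
    rw [one_mul, Unitization.inr_mul, hsm, hin]
    simp [mul_assoc]
  -- B 1 1 is the form at (b, b)
  have hB11 : B 1 1 = qform χ γ b b := by
    rw [hBapp, one_mul]
    have hsnd : (star w * w).snd
        = (-(starRingEnd ℂ (χ b))) • b + (-(χ b)) • star b + star b * b := by
      simp only [Unitization.snd_mul, Unitization.fst_star, Unitization.snd_star,
        hwfst, hwsnd, star_neg, Complex.star_def]
    rw [hsnd]
    simp only [map_add, map_smul, smul_eq_mul, qform, hreal b, map_neg, neg_mul]
    ring
  -- norm bound for S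
  set Kb : ℝ := ‖b‖ + ‖χ b‖ with hKb
  have hKb0 : (0:ℝ) ≤ Kb := by positivity
  set M : ℝ := ‖γ‖ * (Kb * Kb) with hM
  have hM0 : (0:ℝ) ≤ M := by positivity
  have hSbound : ∀ z : A, ‖S z‖ ≤ M * ‖z‖ := by
    intro z
    rw [hSapp, hBapp]
    have hsnd : (star ((1 : Unitization ℂ A) * w) * ((z : Unitization ℂ A) * w)).snd
        = (-(starRingEnd ℂ (χ b))) • ((-(χ b)) • z + z * b)
            + star b * ((-(χ b)) • z + z * b) := by
      rw [one_mul]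
      simp only [Unitization.snd_mul, Unitization.fst_mul, Unitization.fst_star,
        Unitization.snd_star, Unitization.fst_inr, Unitization.snd_inr, hwfst, hwsnd,
        zero_smul, zero_mul, smul_zero, add_zero, zero_add, star_neg, Complex.star_def]
    rw [hsnd]
    set t : A := (-(χ b)) • z + z * b with ht
    have htn : ‖t‖ ≤ Kb * ‖z‖ := by
      calc ‖t‖ ≤ ‖(-(χ b)) • z‖ + ‖z * b‖ := norm_add_le _ _
        _ ≤ ‖χ b‖ * ‖z‖ + ‖z‖ * ‖b‖ := by
            rw [norm_smul, norm_neg]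
            exact add_le_add le_rfl (norm_mul_le _ _)
        _ = Kb * ‖z‖ := by rw [hKb]; ring
    have h1 : ‖(-(starRingEnd ℂ (χ b))) • t + star b * t‖ ≤ Kb * ‖t‖ := by
      calc ‖(-(starRingEnd ℂ (χ b))) • t + star b * t‖
          ≤ ‖(-(starRingEnd ℂ (χ b))) • t‖ + ‖star b * t‖ := norm_add_le _ _
        _ ≤ ‖χ b‖ * ‖t‖ + ‖b‖ * ‖t‖ := by
            rw [norm_smul, norm_neg, RCLike.norm_conj]
            exact add_le_add le_rfl ((norm_mul_le _ _).trans (by rw [norm_star]))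
        _ = Kb * ‖t‖ := by rw [hKb]; ring
    have h3 := γ.le_opNorm ((-(starRingEnd ℂ (χ b))) • t + star b * t)
    calc ‖γ ((-(starRingEnd ℂ (χ b))) • t + star b * t)‖
        ≤ ‖γ‖ * ‖(-(starRingEnd ℂ (χ b))) • t + star b * t‖ := h3
      _ ≤ ‖γ‖ * (Kb * ‖t‖) := by gcongr
      _ ≤ ‖γ‖ * (Kb * (Kb * ‖z‖)) := by gcongr
      _ = M * ‖z‖ := by rw [hM]; ring
  set S₀ : ℝ := (B 1 1).re with hS₀
  have hS₀0 : (0:ℝ) ≤ S₀ := (Complex.nonneg_iff.mp (hBpos 1)).1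
  -- key Cauchy–Schwarz consequence
  have hCSkey : ∀ z : A, ‖S z‖ ^ 2 ≤ S₀ * ‖S (star z * z)‖ := by
    intro z
    have h1 := CS 1 (z : Unitization ℂ A)
    rw [hSB] at h1
    have h2 : ‖B (z : Unitization ℂ A) 1‖ = ‖B 1 (z : Unitization ℂ A)‖ := by
      rw [← hBsymm 1 (z : Unitization ℂ A)]
      exact (RCLike.norm_conj _).symm
    rw [h2, ← hSapp] at h1
    have h3 : (S (star z * z)).re ≤ ‖S (star z * z)‖ :=
      Complex.re_le_norm _
    calc ‖S z‖ ^ 2 = ‖S z‖ * ‖S z‖ := by ring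
      _ ≤ S₀ * (S (star z * z)).re := h1
      _ ≤ S₀ * ‖S (star z * z)‖ := mul_le_mul_of_nonneg_left h3 hS₀0
  -- iterated squares
  set Z : ℕ → A := fun n => Nat.rec c (fun _ x => x * x) n with hZ
  have hZ0 : Z 0 = c := rfl
  have hZs : ∀ n, Z (n + 1) = Z n * Z n := fun _ => rfl
  have hZstar : ∀ n, star (Z n) = Z n := by
    intro n
    induction n with
    | zero => rw [hZ0, hc, star_mul, star_star]
    | succ n ih => rw [hZs, star_mul, ih]
  have hZnorm : ∀ n, ‖Z n‖ ≤ ‖c‖ ^ (2 ^ n) := by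
    intro n
    induction n with
    | zero => simp [hZ0]
    | succ n ih =>
      have h1 : ‖Z (n + 1)‖ ≤ ‖Z n‖ * ‖Z n‖ := by rw [hZs]; exact norm_mul_le _ _
      have h2 : ‖Z n‖ * ‖Z n‖ ≤ ‖c‖ ^ (2 ^ n) * ‖c‖ ^ (2 ^ n) := by
        exact mul_le_mul ih ih (norm_nonneg _) (by positivity)
      have h3 : ‖c‖ ^ (2 ^ n) * ‖c‖ ^ (2 ^ n) = ‖c‖ ^ (2 ^ (n + 1)) := by
        rw [← pow_add]
        congr 1
        omega
      linarith
  have hiter : ∀ n : ℕ, ‖S c‖ ^ (2 ^ n) ≤ S₀ ^ (2 ^ n - 1) * ‖S (Z n)‖ := by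
    intro n
    induction n with
    | zero => simp [hZ0]
    | succ n ih =>
      have e1 : ‖S c‖ ^ (2 ^ (n + 1)) = (‖S c‖ ^ (2 ^ n)) ^ 2 := by
        have e0 : 2 ^ (n + 1) = 2 ^ n * 2 := by ring
        rw [e0, pow_mul]
      have h3 : (‖S c‖ ^ (2 ^ n)) ^ 2 ≤ (S₀ ^ (2 ^ n - 1) * ‖S (Z n)‖) ^ 2 :=
        pow_le_pow_left₀ (by positivity) ih 2
      have h5 : ‖S (Z n)‖ ^ 2 ≤ S₀ * ‖S (Z (n + 1))‖ := by
        have h := hCSkey (Z n)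
        rwa [hZstar n, ← hZs n] at h
      have h6 : (S₀ ^ (2 ^ n - 1) * ‖S (Z n)‖) ^ 2
          ≤ S₀ ^ (2 ^ n - 1) * S₀ ^ (2 ^ n - 1) * (S₀ * ‖S (Z (n + 1))‖) := by
        have : (S₀ ^ (2 ^ n - 1) * ‖S (Z n)‖) ^ 2
            = S₀ ^ (2 ^ n - 1) * S₀ ^ (2 ^ n - 1) * ‖S (Z n)‖ ^ 2 := by ring
        rw [this]
        exact mul_le_mul_of_nonneg_left h5 (by positivity)
      have h7 : S₀ ^ (2 ^ n - 1) * S₀ ^ (2 ^ n - 1) * (S₀ * ‖S (Z (n + 1))‖)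
          = S₀ ^ (2 ^ (n + 1) - 1) * ‖S (Z (n + 1))‖ := by
        have h8 : 1 ≤ 2 ^ n := Nat.one_le_two_pow
        have h9 : (2 ^ n - 1) + ((2 ^ n - 1) + 1) = 2 ^ (n + 1) - 1 := by omega
        calc S₀ ^ (2 ^ n - 1) * S₀ ^ (2 ^ n - 1) * (S₀ * ‖S (Z (n + 1))‖)
            = S₀ ^ ((2 ^ n - 1) + ((2 ^ n - 1) + 1)) * ‖S (Z (n + 1))‖ := by
              rw [pow_add, pow_add, pow_one]; ring
          _ = S₀ ^ (2 ^ (n + 1) - 1) * ‖S (Z (n + 1))‖ := by rw [h9]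
      calc ‖S c‖ ^ (2 ^ (n + 1)) = (‖S c‖ ^ (2 ^ n)) ^ 2 := e1
        _ ≤ (S₀ ^ (2 ^ n - 1) * ‖S (Z n)‖) ^ 2 := h3
        _ ≤ S₀ ^ (2 ^ n - 1) * S₀ ^ (2 ^ n - 1) * (S₀ * ‖S (Z (n + 1))‖) := h6
        _ = S₀ ^ (2 ^ (n + 1) - 1) * ‖S (Z (n + 1))‖ := h7
  have hkey : ∀ n : ℕ, ‖S c‖ ^ (2 ^ n) ≤ S₀ ^ (2 ^ n - 1) * (M * ‖c‖ ^ (2 ^ n)) := by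
    intro n
    refine (hiter n).trans (mul_le_mul_of_nonneg_left ?_ (by positivity))
    exact (hSbound (Z n)).trans (mul_le_mul_of_nonneg_left (hZnorm n) hM0)
  -- conclude ‖S c‖ ≤ S₀ * ‖c‖
  have hfin : ‖S c‖ ≤ S₀ * ‖c‖ := by
    by_contra hcon
    push_neg at hcon
    have hX0 : 0 < ‖S c‖ := lt_of_le_of_lt (by positivity) hcon
    rcases eq_or_lt_of_le hS₀0 with h0 | hS₀pos
    · have h := hkey 1
      rw [← h0] at h
      rw [show ((2:ℕ) ^ 1 : ℕ) = 2 from rfl] at h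
      norm_num at h
      rw [← norm_eq_zero] at h
      nlinarith
    rcases eq_or_lt_of_le (norm_nonneg c) with hc0 | hcpos
    · have h := hkey 1
      rw [← hc0] at h
      rw [show ((2:ℕ) ^ 1 : ℕ) = 2 from rfl] at h
      norm_num at h
      rw [← norm_eq_zero] at h
      nlinarith
    · set r : ℝ := ‖S c‖ / (S₀ * ‖c‖) with hr
      have hden : 0 < S₀ * ‖c‖ := mul_pos hS₀pos hcpos
      have hr1 : 1 < r := (one_lt_div hden).mpr hcon
      have hrn : ∀ n : ℕ, r ^ n ≤ M / S₀ := by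
        intro n
        have h1 : r ^ (2 ^ n) ≤ M / S₀ := by
          rw [hr, div_pow, div_le_div_iff₀ (by positivity) hS₀pos]
          have h2 := hkey n
          calc ‖S c‖ ^ 2 ^ n * S₀ ≤ (S₀ ^ (2 ^ n - 1) * (M * ‖c‖ ^ 2 ^ n)) * S₀ :=
                mul_le_mul_of_nonneg_right h2 hS₀0
            _ = M * (S₀ ^ (2 ^ n - 1) * S₀ * ‖c‖ ^ 2 ^ n) := by ring
            _ = M * (S₀ * ‖c‖) ^ 2 ^ n := by
                rw [← pow_succ]
                have h8 : 1 ≤ 2 ^ n := Nat.one_le_two_pow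
                have h9 : 2 ^ n - 1 + 1 = 2 ^ n := by omega
                rw [h9, mul_pow]
        exact le_trans (pow_le_pow_right₀ hr1.le (Nat.lt_two_pow_self (n := n)).le) h1
      obtain ⟨n, hn⟩ := pow_unbounded_of_one_lt (M / S₀) hr1
      exact absurd (hrn n) (not_le.mpr hn)
  -- identify the two sides
  have hBa : B (a : Unitization ℂ A) (a : Unitization ℂ A)
      = γ (star (a * b - χ b • a) * (a * b - χ b • a)) := by
    have h1 : (a : Unitization ℂ A) * w = ((a * b - χ b • a : A) : Unitization ℂ A) := by
      rw [hwdef, mul_sub, Unitization.inr_sub, ← Unitization.inr_mul, Unitization.inr_mul_inl]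
    rw [hBapp, h1, ← Unitization.inr_star, ← Unitization.inr_mul, Unitization.snd_inr]
  have hScBa : S c = γ (star (a * b - χ b • a) * (a * b - χ b • a)) := by
    rw [hc, ← hSB a a, hBa]
  have hinner : (inner ℂ (d (a * b) - χ b • d a) (d (a * b) - χ b • d a) : ℂ) = S c := by
    rw [hScBa]
    have hexp : star (a * b - χ b • a) * (a * b - χ b • a)
        = star (a * b) * (a * b) - χ b • (star (a * b) * a)
          - (starRingEnd ℂ) (χ b) • (star a * (a * b))
          + ((starRingEnd ℂ) (χ b) * χ b) • (star a * a) := by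
      simp only [star_sub, star_smul, Complex.star_def, sub_mul, mul_sub,
        smul_mul_assoc, mul_smul_comm, smul_smul]
      module
    rw [hexp]
    simp only [inner_sub_left, inner_sub_right, inner_smul_left, inner_smul_right, hd,
      map_sub, map_add, map_smul, qform, map_mul, smul_eq_mul, Complex.star_def]
    ring
  have hLHS : ‖d (a * b) - χ b • d a‖ ^ 2 = (S c).re := by
    rw [norm_sq_eq_re_inner (𝕜 := ℂ) (d (a * b) - χ b • d a), hinner]
    rfl
  have hRHS : S₀ = ‖d b‖ ^ 2 := by
    have h1 : ‖d b‖ ^ 2 = RCLike.re (inner ℂ (d b) (d b) : ℂ) := norm_sq_eq_re_inner (𝕜 := ℂ) (d b)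
    rw [hd b b] at h1
    rw [hS₀, hB11, h1]
    rfl
  have h1 : (S c).re ≤ ‖S c‖ :=
    Complex.re_le_norm _
  have h2 : ‖c‖ = ‖a‖ * ‖a‖ := by rw [hc]; exact CStarRing.norm_star_mul_self
  rw [hLHS]
  calc (S c).re ≤ ‖S c‖ := h1
    _ ≤ S₀ * ‖c‖ := hfin
    _ = ‖a‖ ^ 2 * ‖d b‖ ^ 2 := by rw [hRHS, h2]; ring
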